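/- For any ρ > 0 and t ∈ ℝ, the theta-like function g_{ρ²}(t) := Σ_{x∈ℤ} exp(−(x−t)²/(2ρ²)) satisfies g_{ρ²}(0) − g_{ρ²}(t) ≤ 4·(e^{−2π²ρ²}/(1 − e^{−6π²ρ²}))·g_{ρ²}(0), and hence 1 − 4·e^{−2π²ρ²}/(1−e^{−6π²ρ²}) ≤ g_{ρ²}(t)/g_{ρ²}(0) ≤ 1. -/

import Mathlib

open Real Complex

/-- The theta-like function `g_{ρ²}(t) = Σ_{x∈ℤ} exp(−(x−t)²/(2ρ²))`. -/
noncomputable def thetaG (ρ : ℝ) (t : ℝ) : ℝ := ∑' x : ℤ, Real.exp (-((x : ℝ) - t) ^ 2 / (2 * ρ ^ 2))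

lemma gauss_nat_summable' {K : ℝ} (hK : 0 < K) :
    Summable fun n : ℕ => Real.exp (-K * ((n : ℝ)) ^ 2) := by
  refine Summable.of_nonneg_of_le (fun n => (Real.exp_pos _).le) (fun n => ?_)
    ((summable_geometric_of_lt_one (Real.exp_pos _).le
      (Real.exp_lt_one_iff.mpr (by linarith : -K < 0))))
  rw [← Real.exp_nat_mul]
  apply Real.exp_le_exp.mpr
  have h2 : (n:ℝ) ≤ (n:ℝ)^2 := by exact_mod_cast Nat.le_self_pow two_ne_zero n
  nlinarith [mul_nonneg hK.le (sub_nonneg.2 h2)]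

lemma gauss_summable {K : ℝ} (hK : 0 < K) :
    Summable fun n : ℤ => Real.exp (-K * (n : ℝ) ^ 2) := by
  refine Summable.of_nat_of_neg ?_ ?_ <;> simpa using gauss_nat_summable' hK

/-- Poisson summation for the shifted Gaussian. -/
lemma thetaG_poisson (ρ t : ℝ) (hρ : 0 < ρ) :
    thetaG ρ t = Real.sqrt (2 * π * ρ ^ 2) *
      ∑' n : ℤ, Real.exp (-(2 * π ^ 2 * ρ ^ 2) * (n : ℝ) ^ 2) * Real.cos (2 * π * n * t) := by
  have hc : (0:ℝ) < 2 * π * ρ ^ 2 := by positivity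
  obtain ⟨c, hcdef⟩ : ∃ c : ℝ, c = 2 * π * ρ ^ 2 := ⟨_, rfl⟩
  rw [← hcdef] at hc ⊢
  have ha : 0 < ((c : ℂ)⁻¹).re := by
    rw [← Complex.ofReal_inv, Complex.ofReal_re]
    positivity
  have h := Complex.tsum_exp_neg_quadratic ha ((t / c : ℝ) : ℂ)
  have hρ0 : ρ ≠ 0 := hρ.ne'
  have hπ0 : π ≠ 0 := Real.pi_ne_zero
  have hc0 : c ≠ 0 := hc.ne'
  set E : ℝ := Real.exp (t ^ 2 / (2 * ρ ^ 2)) with hEdef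
  have hL : (∑' n : ℤ, cexp (-(π:ℂ) * ((c:ℂ))⁻¹ * (n:ℂ) ^ 2 + 2 * (π:ℂ) * ((t / c : ℝ):ℂ) * (n:ℂ)))
      = ((E * thetaG ρ t : ℝ) : ℂ) := by
    rw [thetaG, hEdef, Complex.ofReal_mul, Complex.ofReal_tsum, ← tsum_mul_left]
    refine tsum_congr fun n => ?_
    rw [Complex.ofReal_exp, Complex.ofReal_exp, ← Complex.exp_add]
    congr 1
    have hπc : (π:ℂ) ≠ 0 := Complex.ofReal_ne_zero.mpr hπ0
    have hρc : (ρ:ℂ) ≠ 0 := Complex.ofReal_ne_zero.mpr hρ0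
    subst hcdef
    push_cast
    field_simp
    ring
  have h1 : (1:ℂ) / ((c:ℂ))⁻¹ ^ (1/2 : ℂ) = ((Real.sqrt c : ℝ) : ℂ) := by
    rw [← Complex.ofReal_inv, show (1/2 : ℂ) = ((1/2 : ℝ) : ℂ) by norm_num,
      ← Complex.ofReal_cpow (by positivity), ← Complex.ofReal_one, ← Complex.ofReal_div]
    congr 1
    rw [Real.inv_rpow hc.le, one_div, inv_inv]
    exact (Real.sqrt_eq_rpow c).symm
  have hterm : ∀ n : ℤ, -(π:ℂ)/((c:ℂ))⁻¹ * ((n:ℂ) + I * ((t/c:ℝ):ℂ))^2 =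
      ((-(π*c)*(n:ℝ)^2 + t^2/(2*ρ^2) : ℝ) : ℂ) + ((-(2*π*n*t) : ℝ):ℂ) * I := by
    intro n
    have hπc : (π:ℂ) ≠ 0 := Complex.ofReal_ne_zero.mpr Real.pi_ne_zero
    have hρc : (ρ:ℂ) ≠ 0 := Complex.ofReal_ne_zero.mpr hρ0
    subst hcdef
    push_cast
    field_simp
    ring_nf
    rw [I_sq]
    ring
  have hre : ∀ n : ℤ, (cexp (-(π:ℂ)/((c:ℂ))⁻¹ * ((n:ℂ) + I * ((t/c:ℝ):ℂ))^2)).re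
      = E * (Real.exp (-(π*c)*(n:ℝ)^2) * Real.cos (2*π*n*t)) := by
    intro n
    rw [hterm n, Complex.exp_re]
    simp only [Complex.add_re, Complex.ofReal_re, Complex.mul_re, Complex.I_re, Complex.I_im,
      Complex.ofReal_im, Complex.add_im, Complex.mul_im, mul_zero, zero_mul, mul_one, sub_zero,
      add_zero, zero_add, zero_sub, neg_zero]
    rw [Real.exp_add, Real.cos_neg, hEdef]
    ring
  have hπcpos : 0 < π * c := by positivity
  have hsumre : Summable fun n : ℤ => Real.exp (-(π*c)*(n:ℝ)^2) := gauss_summable hπcpos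
  have hsumF : Summable fun n : ℤ => cexp (-(π:ℂ)/((c:ℂ))⁻¹ * ((n:ℂ) + I * ((t/c:ℝ):ℂ))^2) := by
    apply Summable.of_norm
    have : ∀ n : ℤ, ‖cexp (-(π:ℂ)/((c:ℂ))⁻¹ * ((n:ℂ) + I * ((t/c:ℝ):ℂ))^2)‖
        = E * Real.exp (-(π*c)*(n:ℝ)^2) := by
      intro n
      rw [Complex.norm_exp, hterm n]
      simp only [Complex.add_re, Complex.ofReal_re, Complex.mul_re, Complex.I_re, Complex.I_im,
        Complex.ofReal_im, mul_zero, zero_mul, mul_one, sub_zero, add_zero, zero_add, zero_sub,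
        neg_zero]
      rw [Real.exp_add, hEdef]
      ring
    rw [funext this]
    exact hsumre.mul_left _
  have hmain : E * thetaG ρ t = Real.sqrt c * (E * ∑' n : ℤ,
      Real.exp (-(π*c)*(n:ℝ)^2) * Real.cos (2*π*n*t)) := by
    have := congrArg Complex.re (hL.symm.trans (h.trans (by rw [h1])))
    rw [Complex.ofReal_re] at this
    rw [this, Complex.re_ofReal_mul, Complex.re_tsum hsumF]
    rw [funext hre, tsum_mul_left]
  have hE0 : E ≠ 0 := (Real.exp_pos _).ne'
  have : thetaG ρ t = Real.sqrt c * ∑' n : ℤ, Real.exp (-(π*c)*(n:ℝ)^2) * Real.cos (2*π*n*t) := by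
    apply mul_left_cancel₀ hE0
    rw [hmain]; ring
  rw [this]
  congr 2
  funext n
  rw [hcdef]
  ring_nf

/-- For any `ρ > 0` and `t ∈ ℝ`:
`g_{ρ²}(0) − g_{ρ²}(t) ≤ 4·(e^{−2π²ρ²}/(1 − e^{−6π²ρ²}))·g_{ρ²}(0)`, and hence
`1 − 4·e^{−2π²ρ²}/(1−e^{−6π²ρ²}) ≤ g_{ρ²}(t)/g_{ρ²}(0) ≤ 1`. -/
theorem thetaG_ratio_bounds (ρ t : ℝ) (hρ : 0 < ρ) :
    thetaG ρ 0 - thetaG ρ t ≤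
        4 * (Real.exp (-2 * Real.pi ^ 2 * ρ ^ 2) / (1 - Real.exp (-6 * Real.pi ^ 2 * ρ ^ 2))) *
          thetaG ρ 0 ∧
      1 - 4 * Real.exp (-2 * Real.pi ^ 2 * ρ ^ 2) / (1 - Real.exp (-6 * Real.pi ^ 2 * ρ ^ 2)) ≤
        thetaG ρ t / thetaG ρ 0 ∧
      thetaG ρ t / thetaG ρ 0 ≤ 1 := by
  set K : ℝ := 2 * π ^ 2 * ρ ^ 2 with hKdef
  have hK : 0 < K := by positivity
  set s : ℝ := Real.sqrt (2 * π * ρ ^ 2) with hsdef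
  have hs : 0 < s := Real.sqrt_pos.mpr (by positivity)
  have hsA : Summable fun n : ℤ => Real.exp (-K * (n : ℝ) ^ 2) := gauss_summable hK
  have hsB : Summable fun n : ℤ => Real.exp (-K * (n : ℝ) ^ 2) * Real.cos (2 * π * n * t) :=
    hsA.of_norm_bounded (fun n => by
      rw [norm_mul, Real.norm_eq_abs, Real.norm_eq_abs, abs_of_pos (Real.exp_pos _)]
      exact mul_le_of_le_one_right (Real.exp_pos _).le (abs_cos_le_one _))
  set d : ℤ → ℝ := fun n => Real.exp (-K * (n : ℝ) ^ 2) * (1 - Real.cos (2 * π * n * t))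
    with hddef
  have hsd : Summable d := by
    have := hsA.sub hsB
    refine this.congr fun n => by simp [hddef]; ring
  have hd0 : d 0 = 0 := by simp [hddef]
  have hgeo : Summable fun n : ℕ => 2 * Real.exp (-K) * Real.exp (-(3*K)) ^ n :=
    (summable_geometric_of_lt_one (Real.exp_pos _).le
      (Real.exp_lt_one_iff.mpr (by linarith))).mul_left _
  have hgeosum : ∑' n : ℕ, 2 * Real.exp (-K) * Real.exp (-(3*K)) ^ n
      = 2 * (Real.exp (-K) / (1 - Real.exp (-(3*K)))) := by
    rw [tsum_mul_left, tsum_geometric_of_lt_one (Real.exp_pos _).le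
      (Real.exp_lt_one_iff.mpr (by linarith))]
    rw [div_eq_mul_inv]; ring
  have hbound : ∀ m : ℕ, ∀ n : ℤ, (n:ℝ)^2 = ((m:ℝ)+1)^2 →
      d n ≤ 2 * Real.exp (-K) * Real.exp (-(3*K)) ^ m := by
    intro m n hn
    have h1 : d n ≤ 2 * Real.exp (-K * ((m:ℝ)+1)^2) := by
      rw [hddef]
      simp only
      rw [hn]
      nlinarith [Real.neg_one_le_cos (2*π*n*t), Real.exp_pos (-K * ((m:ℝ)+1)^2)]
    refine h1.trans ?_
    rw [← Real.exp_nat_mul, mul_assoc, ← Real.exp_add]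
    have h2 : -K * ((m:ℝ)+1)^2 ≤ -K + (m:ℝ)*(-(3*K)) := by
      have h3 : (m:ℝ) ≤ (m:ℝ)^2 := by exact_mod_cast Nat.le_self_pow two_ne_zero m
      nlinarith [mul_nonneg hK.le (sub_nonneg.2 h3)]
    exact mul_le_mul_of_nonneg_left (Real.exp_le_exp.mpr h2) (by norm_num)
  have hsd1 : Summable fun n : ℕ => d n := hsd.comp_injective Nat.cast_injective
  have hsd2 : Summable fun n : ℕ => d (-(n+1)) :=
    hsd.comp_injective (fun a b h => by omega)
  have hsplit : ∑' n : ℤ, d n = (∑' n : ℕ, d n) + ∑' n : ℕ, d (-(n+1)) :=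
    tsum_of_nat_of_neg_add_one hsd1 hsd2
  have hside1 : ∑' n : ℕ, d n ≤ 2 * (Real.exp (-K) / (1 - Real.exp (-(3*K)))) := by
    rw [Summable.tsum_eq_zero_add hsd1]
    simp only [Nat.cast_zero, hd0, zero_add]
    rw [← hgeosum]
    have hsd1' : Summable (fun n : ℕ => d ((n + 1 : ℕ) : ℤ)) :=
      hsd.comp_injective (fun a b h => by omega)
    refine Summable.tsum_le_tsum (fun m => ?_) hsd1' hgeo
    exact hbound m ((m + 1 : ℕ) : ℤ) (by push_cast; ring)
  have hside2 : ∑' n : ℕ, d (-(n+1)) ≤ 2 * (Real.exp (-K) / (1 - Real.exp (-(3*K)))) := by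
    rw [← hgeosum]
    exact Summable.tsum_le_tsum (fun m => hbound m (-(m+1)) (by push_cast; ring)) hsd2 hgeo
  have hdsum : ∑' n : ℤ, d n ≤ 4 * (Real.exp (-K) / (1 - Real.exp (-(3*K)))) := by
    rw [hsplit]; linarith
  -- expressions for thetaG
  have hgt : thetaG ρ t = s * ∑' n : ℤ, Real.exp (-K * (n:ℝ)^2) * Real.cos (2*π*n*t) := by
    rw [thetaG_poisson ρ t hρ]
  have hg0 : thetaG ρ 0 = s * ∑' n : ℤ, Real.exp (-K * (n:ℝ)^2) := by
    rw [thetaG_poisson ρ 0 hρ]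
    congr 1
    exact tsum_congr fun n => by simp [hKdef]
  -- basic facts
  have hA1 : (1:ℝ) ≤ ∑' n : ℤ, Real.exp (-K * (n:ℝ)^2) := by
    have := Summable.le_tsum hsA 0 (fun i _ => (Real.exp_pos _).le)
    simpa using this
  have hsg0 : s ≤ thetaG ρ 0 := by
    rw [hg0]
    nlinarith
  have hg0pos : 0 < thetaG ρ 0 := lt_of_lt_of_le hs hsg0
  have hBA : thetaG ρ t ≤ thetaG ρ 0 := by
    rw [hgt, hg0]
    refine mul_le_mul_of_nonneg_left (Summable.tsum_le_tsum (fun n => ?_) hsB hsA) hs.le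
    exact mul_le_of_le_one_right (Real.exp_pos _).le (Real.cos_le_one _)
  have hdiff : thetaG ρ 0 - thetaG ρ t = s * ∑' n : ℤ, d n := by
    rw [hgt, hg0, ← mul_sub, ← Summable.tsum_sub hsA hsB]
    congr 1
    refine (tsum_congr fun n => ?_)
    simp only [hddef]
    ring
  -- exponent identifications
  have hKe : Real.exp (-2 * π ^ 2 * ρ ^ 2) = Real.exp (-K) := by rw [hKdef]; ring_nf
  have hKe3 : Real.exp (-6 * π ^ 2 * ρ ^ 2) = Real.exp (-(3*K)) := by rw [hKdef]; ring_nf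
  have hX : 0 ≤ Real.exp (-K) / (1 - Real.exp (-(3*K))) := by
    apply div_nonneg (Real.exp_pos _).le
    have : Real.exp (-(3*K)) < 1 := Real.exp_lt_one_iff.mpr (by linarith)
    linarith
  have part1 : thetaG ρ 0 - thetaG ρ t ≤
      4 * (Real.exp (-2 * π ^ 2 * ρ ^ 2) / (1 - Real.exp (-6 * π ^ 2 * ρ ^ 2))) * thetaG ρ 0 := by
    rw [hKe, hKe3, hdiff]
    calc s * ∑' n : ℤ, d n ≤ s * (4 * (Real.exp (-K) / (1 - Real.exp (-(3*K))))) :=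
          mul_le_mul_of_nonneg_left hdsum hs.le
      _ ≤ thetaG ρ 0 * (4 * (Real.exp (-K) / (1 - Real.exp (-(3*K))))) := by
          refine mul_le_mul_of_nonneg_right hsg0 (by linarith)
      _ = 4 * (Real.exp (-K) / (1 - Real.exp (-(3*K)))) * thetaG ρ 0 := by ring
  refine ⟨part1, ?_, div_le_one_of_le₀ hBA hg0pos.le⟩
  rw [le_div_iff₀ hg0pos]
  have h4 : 4 * Real.exp (-2 * π ^ 2 * ρ ^ 2) / (1 - Real.exp (-6 * π ^ 2 * ρ ^ 2))
      = 4 * (Real.exp (-2 * π ^ 2 * ρ ^ 2) / (1 - Real.exp (-6 * π ^ 2 * ρ ^ 2))) := by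
    ring
  rw [h4]
  nlinarith [part1]
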